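/- The Local Price of Anarchy of local 2-type Swap Schelling Games on a connected graph G with minimum degree δ ≥ 2 and maximum degree Δ is at most 2(1 + (Δ+1)/(δ−1)). In particular, in any local swap equilibrium the average utility of an agent is at least (δ−1)/(2(δ+Δ)). -/

import Mathlib

open SimpleGraph Finset
open scoped Classical

noncomputable def ssgUtil {V A : Type*} [Fintype V] [DecidableEq V]
    (G : SimpleGraph V) [DecidableRel G.Adj]
    {k : ℕ} (c : A → Fin k) (σ : A ≃ V) (i : A) : ℚ :=
  (((G.neighborFinset (σ i)).filter (fun v => c (σ.symm v) = c i)).card : ℚ) /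
    (G.degree (σ i) : ℚ)

def ssgSwap {V A : Type*} [DecidableEq V] (σ : A ≃ V) (i j : A) : A ≃ V :=
  σ.trans (Equiv.swap (σ i) (σ j))

def ssgProfitable {V A : Type*} [Fintype V] [DecidableEq V]
    (G : SimpleGraph V) [DecidableRel G.Adj]
    {k : ℕ} (c : A → Fin k) (σ : A ≃ V) (i j : A) : Prop :=
  c i ≠ c j ∧
    ssgUtil G c σ i < ssgUtil G c (ssgSwap σ i j) i ∧
    ssgUtil G c σ j < ssgUtil G c (ssgSwap σ i j) j

def ssgEquilibrium {V A : Type*} [Fintype V] [DecidableEq V]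
    (G : SimpleGraph V) [DecidableRel G.Adj]
    {k : ℕ} (c : A → Fin k) (σ : A ≃ V) : Prop :=
  ∀ i j : A, ¬ ssgProfitable G c σ i j

def ssgLocalEquilibrium {V A : Type*} [Fintype V] [DecidableEq V]
    (G : SimpleGraph V) [DecidableRel G.Adj]
    {k : ℕ} (c : A → Fin k) (σ : A ≃ V) : Prop :=
  ∀ i j : A, G.Adj (σ i) (σ j) → ¬ ssgProfitable G c σ i j

noncomputable def ssgWelfare {V A : Type*} [Fintype V] [DecidableEq V] [Fintype A]
    (G : SimpleGraph V) [DecidableRel G.Adj]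
    {k : ℕ} (c : A → Fin k) (σ : A ≃ V) : ℚ :=
  ∑ i : A, ssgUtil G c σ i

noncomputable def ssgPhi {V A : Type*} [Fintype V] [DecidableEq V]
    (G : SimpleGraph V) [DecidableRel G.Adj]
    {k : ℕ} (c : A → Fin k) (σ : A ≃ V) : ℕ :=
  (G.edgeFinset.filter (fun e => ∀ u ∈ e, ∀ v ∈ e, c (σ.symm u) = c (σ.symm v))).card



set_option linter.unusedSectionVars false

section SSGAux

variable {V A : Type*} [Fintype V] [DecidableEq V]
  (G : SimpleGraph V) [DecidableRel G.Adj]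

private lemma ssg_fin2 {x y z : Fin 2} (h : y ≠ z) : x = y ↔ ¬ x = z := by
  revert h; revert x y z; decide

private lemma ssg_count_split (c : A → Fin 2) (σ : A ≃ V) (i j : A) (hc : c i ≠ c j) :
    ((G.neighborFinset (σ j)).filter (fun v => c (σ.symm v) = c i)).card
      + ((G.neighborFinset (σ j)).filter (fun v => c (σ.symm v) = c j)).card
      = G.degree (σ j) := by
  have hfe : (G.neighborFinset (σ j)).filter (fun v => c (σ.symm v) = c j)
      = (G.neighborFinset (σ j)).filter (fun v => ¬ c (σ.symm v) = c i) := by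
    apply Finset.filter_congr
    intro v _
    simpa using (ssg_fin2 (x := c (σ.symm v)) (y := c j) (z := c i) hc.symm)
  rw [hfe, Finset.card_filter_add_card_filter_not,
    SimpleGraph.card_neighborFinset_eq_degree]

private lemma ssg_swap_util (c : A → Fin 2) (σ : A ≃ V) (i j : A)
    (hadj : G.Adj (σ i) (σ j)) (hc : c i ≠ c j) :
    ssgUtil G c (ssgSwap σ i j) i
      = 1 - ssgUtil G c σ j - 1 / (G.degree (σ j) : ℚ) := by
  have happ : (ssgSwap σ i j) i = σ j := by
    simp [ssgSwap, Equiv.swap_apply_left]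
  have hsymm : ∀ v, (ssgSwap σ i j).symm v = σ.symm (Equiv.swap (σ i) (σ j) v) := by
    intro v; simp [ssgSwap]
  have hset : ((G.neighborFinset (σ j)).filter
        (fun v => c ((ssgSwap σ i j).symm v) = c i))
      = ((G.neighborFinset (σ j)).filter (fun v => c (σ.symm v) = c i)).erase (σ i) := by
    ext v
    simp only [Finset.mem_erase, Finset.mem_filter, SimpleGraph.mem_neighborFinset, hsymm]
    constructor
    · rintro ⟨hv, hcv⟩
      have hvj : v ≠ σ j := fun h => G.loopless.irrefl _ (h ▸ hv)
      by_cases hvi : v = σ i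
      · exfalso
        subst hvi
        rw [Equiv.swap_apply_left] at hcv
        simp only [Equiv.symm_apply_apply] at hcv
        exact hc hcv.symm
      · rw [Equiv.swap_apply_of_ne_of_ne hvi hvj] at hcv
        exact ⟨hvi, hv, hcv⟩
    · rintro ⟨hvi, hv, hcv⟩
      have hvj : v ≠ σ j := fun h => G.loopless.irrefl _ (h ▸ hv)
      rw [Equiv.swap_apply_of_ne_of_ne hvi hvj]
      exact ⟨hv, hcv⟩
  have hmem : σ i ∈ (G.neighborFinset (σ j)).filter (fun v => c (σ.symm v) = c i) := by
    simp [SimpleGraph.mem_neighborFinset, hadj.symm]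
  set T := ((G.neighborFinset (σ j)).filter (fun v => c (σ.symm v) = c i)).card with hT
  set S := ((G.neighborFinset (σ j)).filter (fun v => c (σ.symm v) = c j)).card with hS
  have hTS : T + S = G.degree (σ j) := ssg_count_split G c σ i j hc
  have hT1 : 1 ≤ T := Finset.card_pos.2 ⟨σ i, hmem⟩
  have hd0 : (0 : ℚ) < (G.degree (σ j) : ℚ) := by
    have : 0 < G.degree (σ j) := by omega
    exact_mod_cast this
  have hcard : ((G.neighborFinset (σ j)).filter
      (fun v => c ((ssgSwap σ i j).symm v) = c i)).card = T - 1 := by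
    rw [hset, Finset.card_erase_of_mem hmem]
  rw [ssgUtil, ssgUtil, happ]
  rw [hcard]
  have hTQ : ((T - 1 : ℕ) : ℚ) = (T : ℚ) - 1 := by
    push_cast [Nat.cast_sub hT1]; ring
  have hTSQ : (T : ℚ) + (S : ℚ) = (G.degree (σ j) : ℚ) := by exact_mod_cast hTS
  rw [hTQ]
  field_simp
  linarith

private lemma ssg_count_agents [Fintype A] {k : ℕ} (c : A → Fin k) (σ : A ≃ V) (i : A) :
    (Finset.univ.filter (fun j : A => G.Adj (σ i) (σ j) ∧ c j ≠ c i)).card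
      = ((G.neighborFinset (σ i)).filter (fun v => ¬ c (σ.symm v) = c i)).card := by
  apply Finset.card_bij (fun j _ => σ j)
  · intro j hj
    simp only [Finset.mem_filter, Finset.mem_univ, true_and] at hj
    simp only [Finset.mem_filter, SimpleGraph.mem_neighborFinset, Equiv.symm_apply_apply]
    exact ⟨hj.1, hj.2⟩
  · intro a _ b _ h
    exact σ.injective h
  · intro v hv
    simp only [Finset.mem_filter, SimpleGraph.mem_neighborFinset] at hv
    refine ⟨σ.symm v, ?_, by simp⟩
    simp only [Finset.mem_filter, Finset.mem_univ, true_and, Equiv.apply_symm_apply]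
    exact hv

end SSGAux

theorem stmt9 {V A : Type*} [Fintype V] [DecidableEq V] [Fintype A]
    (G : SimpleGraph V) [DecidableRel G.Adj] (hconn : G.Connected)
    (hδ : 2 ≤ G.minDegree)
    (c : A → Fin 2) (σ : A ≃ V) (heq : ssgLocalEquilibrium G c σ) :
    (Fintype.card A : ℚ) * (((G.minDegree : ℚ) - 1) /
        (2 * ((G.minDegree : ℚ) + (G.maxDegree : ℚ)))) ≤ ssgWelfare G c σ ∧
    ∀ σ' : A ≃ V,
      ssgWelfare G c σ' ≤
        2 * (1 + ((G.maxDegree : ℚ) + 1) / ((G.minDegree : ℚ) - 1)) *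
          ssgWelfare G c σ := by
  classical
  obtain ⟨v0⟩ := hconn.nonempty
  set δq : ℚ := (G.minDegree : ℚ) with hδqdef
  set Δq : ℚ := (G.maxDegree : ℚ) with hΔqdef
  have hδ2 : (2 : ℚ) ≤ δq := by rw [hδqdef]; exact_mod_cast hδ
  have hδ0 : (0 : ℚ) < δq := by linarith
  have hdeg_lb : ∀ v : V, δq ≤ (G.degree v : ℚ) := fun v => by
    rw [hδqdef]; exact_mod_cast G.minDegree_le_degree v
  have hdeg_ub : ∀ v : V, (G.degree v : ℚ) ≤ Δq := fun v => by
    rw [hΔqdef]; exact_mod_cast G.degree_le_maxDegree v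
  have hdpos : ∀ v : V, (0 : ℚ) < (G.degree v : ℚ) := fun v =>
    lt_of_lt_of_le hδ0 (hdeg_lb v)
  have hΔδ : δq ≤ Δq := le_trans (hdeg_lb v0) (hdeg_ub v0)
  have hutil01 : ∀ (τ : A ≃ V) (i : A), 0 ≤ ssgUtil G c τ i ∧ ssgUtil G c τ i ≤ 1 := by
    intro τ i
    have hle : (((G.neighborFinset (τ i)).filter
        (fun v => c (τ.symm v) = c i)).card : ℚ) ≤ (G.degree (τ i) : ℚ) := by
      have := Finset.card_filter_le (G.neighborFinset (τ i))
        (fun v => c (τ.symm v) = c i)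
      rw [SimpleGraph.card_neighborFinset_eq_degree] at this
      exact_mod_cast this
    constructor
    · exact div_nonneg (by positivity) (hdpos (τ i)).le
    · rw [ssgUtil, div_le_one (hdpos (τ i))]
      exact hle
  set u : A → ℚ := fun i => ssgUtil G c σ i with hudef
  set F : A → Finset A :=
    fun i => Finset.univ.filter (fun j => G.Adj (σ i) (σ j) ∧ c j ≠ c i) with hFdef
  set b : A → ℚ := fun i => ((F i).card : ℚ) with hbdef
  have hu0 : ∀ i, 0 ≤ u i := fun i => (hutil01 σ i).1
  have hu1 : ∀ i, u i ≤ 1 := fun i => (hutil01 σ i).2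
  have hb0 : ∀ i, 0 ≤ b i := fun i => by
    simp only [hbdef]; positivity
  have hbd : ∀ i, b i + (((G.neighborFinset (σ i)).filter
      (fun v => c (σ.symm v) = c i)).card : ℚ) = (G.degree (σ i) : ℚ) := by
    intro i
    have h1 := ssg_count_agents G c σ i
    have h2 := Finset.card_filter_add_card_filter_not
      (s := G.neighborFinset (σ i)) (p := fun v => c (σ.symm v) = c i)
    rw [SimpleGraph.card_neighborFinset_eq_degree] at h2
    have h3 : (F i).card + ((G.neighborFinset (σ i)).filter
        (fun v => c (σ.symm v) = c i)).card = G.degree (σ i) := by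
      simp only [hFdef]
      rw [h1]
      omega
    simp only [hbdef]
    exact_mod_cast h3
  have hub : ∀ i, u i = 1 - b i / (G.degree (σ i) : ℚ) := by
    intro i
    have h := hbd i
    simp only [hudef]
    rw [ssgUtil]
    have hd := hdpos (σ i)
    field_simp
    linarith
  have hbΔ : ∀ i, b i ≤ Δq := by
    intro i
    have h1 := hbd i
    have h2 : (0 : ℚ) ≤ (((G.neighborFinset (σ i)).filter
        (fun v => c (σ.symm v) = c i)).card : ℚ) := by positivity
    have := hdeg_ub (σ i)
    linarith
  have hpair : ∀ i j, j ∈ F i → 1 - 1 / δq ≤ u i + u j := by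
    intro i j hj
    simp only [hFdef, Finset.mem_filter, Finset.mem_univ, true_and] at hj
    obtain ⟨hadj, hcj⟩ := hj
    have hc : c i ≠ c j := hcj.symm
    have hne := heq i j hadj
    rw [ssgProfitable] at hne
    push_neg at hne
    have hne2 := hne hc
    have hui' : ssgUtil G c (ssgSwap σ i j) i
        = 1 - u j - 1 / (G.degree (σ j) : ℚ) := ssg_swap_util G c σ i j hadj hc
    have hswapcomm : ssgSwap σ i j = ssgSwap σ j i := by
      rw [ssgSwap, ssgSwap, Equiv.swap_comm]
    have huj' : ssgUtil G c (ssgSwap σ i j) j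
        = 1 - u i - 1 / (G.degree (σ i) : ℚ) := by
      rw [hswapcomm]
      exact ssg_swap_util G c σ j i hadj.symm hcj
    have hdi : 1 / (G.degree (σ i) : ℚ) ≤ 1 / δq :=
      one_div_le_one_div_of_le hδ0 (hdeg_lb (σ i))
    have hdj : 1 / (G.degree (σ j) : ℚ) ≤ 1 / δq :=
      one_div_le_one_div_of_le hδ0 (hdeg_lb (σ j))
    by_cases hlt : ssgUtil G c σ i < ssgUtil G c (ssgSwap σ i j) i
    · have h := hne2 hlt
      rw [huj'] at h
      have h1 : ssgUtil G c σ j = u j := rfl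
      rw [h1] at h
      linarith
    · push_neg at hlt
      rw [hui'] at hlt
      have h1 : ssgUtil G c σ i = u i := rfl
      rw [h1] at hlt
      linarith
  have hsum1 : ∀ i, b i * (1 - 1 / δq) ≤ ∑ j ∈ F i, (u i + u j) := by
    intro i
    have h := Finset.card_nsmul_le_sum (F i) (fun j => u i + u j) (1 - 1 / δq)
      (fun j hj => hpair i j hj)
    rw [nsmul_eq_mul] at h
    simp only [hbdef]
    exact h
  have hT : (∑ i, b i) * (1 - 1 / δq) ≤ ∑ i, ∑ j ∈ F i, (u i + u j) := by
    rw [Finset.sum_mul]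
    exact Finset.sum_le_sum (fun i _ => hsum1 i)
  have hswapsum : ∑ i, ∑ j ∈ F i, u j = ∑ j, b j * u j := by
    have e1 : ∀ i : A, ∑ j ∈ F i, u j
        = ∑ j, if G.Adj (σ i) (σ j) ∧ c j ≠ c i then u j else 0 := by
      intro i
      simp only [hFdef]
      exact Finset.sum_filter _ _
    rw [Finset.sum_congr rfl (fun i _ => e1 i), Finset.sum_comm]
    refine Finset.sum_congr rfl (fun j _ => ?_)
    rw [← Finset.sum_filter, Finset.sum_const, nsmul_eq_mul]
    have hcard : (Finset.univ.filter (fun i : A => G.Adj (σ i) (σ j) ∧ c j ≠ c i)) = F j := by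
      simp only [hFdef]
      apply Finset.filter_congr
      intro i _
      exact ⟨fun h => ⟨h.1.symm, h.2.symm⟩, fun h => ⟨h.1.symm, h.2.symm⟩⟩
    rw [hcard]
  have hdec : ∑ i, ∑ j ∈ F i, (u i + u j) = 2 * ∑ i, b i * u i := by
    have e1 : ∀ i : A, ∑ j ∈ F i, (u i + u j) = b i * u i + ∑ j ∈ F i, u j := by
      intro i
      rw [Finset.sum_add_distrib, Finset.sum_const, nsmul_eq_mul]
    rw [Finset.sum_congr rfl (fun i _ => e1 i), Finset.sum_add_distrib, hswapsum]
    ring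
  have hbu : ∑ i, b i * u i ≤ Δq * ∑ i, u i := by
    rw [Finset.mul_sum]
    exact Finset.sum_le_sum (fun i _ => mul_le_mul_of_nonneg_right (hbΔ i) (hu0 i))
  set W : ℚ := ∑ i, u i with hWdef
  set B : ℚ := ∑ i, b i with hBdef
  have hmain : B * (1 - 1 / δq) ≤ 2 * (Δq * W) := by
    calc B * (1 - 1 / δq) ≤ ∑ i, ∑ j ∈ F i, (u i + u j) := hT
      _ = 2 * ∑ i, b i * u i := hdec
      _ ≤ 2 * (Δq * W) := by linarith [hbu]
  have hWn : (Fintype.card A : ℚ) - B / δq ≤ W := by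
    have e1 : ∀ i : A, 1 - b i / δq ≤ u i := by
      intro i
      rw [hub i]
      have h1 : b i / (G.degree (σ i) : ℚ) ≤ b i / δq :=
        div_le_div_of_nonneg_left (hb0 i) hδ0 (hdeg_lb (σ i))
      linarith
    have e2 : ∑ i : A, (1 - b i / δq) ≤ W := Finset.sum_le_sum (fun i _ => e1 i)
    rw [Finset.sum_sub_distrib, Finset.sum_const, Finset.card_univ, nsmul_eq_mul,
      mul_one, ← Finset.sum_div] at e2
    exact e2
  have hW0 : 0 ≤ W := Finset.sum_nonneg (fun i _ => hu0 i)
  have hB0 : 0 ≤ B := Finset.sum_nonneg (fun i _ => hb0 i)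
  have hn0 : (0 : ℚ) ≤ (Fintype.card A : ℚ) := Nat.cast_nonneg _
  have key : B * (δq - 1) ≤ 2 * Δq * W * δq := by
    have h2 := mul_le_mul_of_nonneg_right hmain hδ0.le
    have e : B * (1 - 1 / δq) * δq = B * (δq - 1) := by
      field_simp
    rw [e] at h2
    linarith
  have key2 : (Fintype.card A : ℚ) * δq - B ≤ W * δq := by
    have h3 := mul_le_mul_of_nonneg_right hWn hδ0.le
    have e : ((Fintype.card A : ℚ) - B / δq) * δq = (Fintype.card A : ℚ) * δq - B := by
      field_simp
    rw [e] at h3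
    exact h3
  have part1 : (Fintype.card A : ℚ) * ((δq - 1) / (2 * (δq + Δq))) ≤ W := by
    have hpos : (0 : ℚ) < 2 * (δq + Δq) := by linarith
    rw [← mul_div_assoc, div_le_iff₀ hpos]
    have h4 := mul_le_mul_of_nonneg_left key2 (by linarith : (0 : ℚ) ≤ δq - 1)
    have h5 : ((Fintype.card A : ℚ) * (δq - 1)) * δq ≤ (W * (2 * (δq + Δq))) * δq := by
      nlinarith [h4, key,
        mul_nonneg (mul_nonneg hW0 hδ0.le) (by linarith : (0 : ℚ) ≤ δq + 1)]
    exact le_of_mul_le_mul_right h5 hδ0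
  have hWeq : ssgWelfare G c σ = W := by
    rw [ssgWelfare, hWdef]
  refine ⟨by rw [hWeq]; exact part1, ?_⟩
  intro σ'
  have hW'le : ssgWelfare G c σ' ≤ (Fintype.card A : ℚ) := by
    rw [ssgWelfare]
    calc ∑ i : A, ssgUtil G c σ' i ≤ ∑ _i : A, (1 : ℚ) :=
          Finset.sum_le_sum (fun i _ => (hutil01 σ' i).2)
      _ = (Fintype.card A : ℚ) := by
          rw [Finset.sum_const, Finset.card_univ, nsmul_eq_mul, mul_one]
  have hδ1 : (0 : ℚ) < δq - 1 := by linarith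
  have hCpos : (0 : ℚ) ≤ 2 * (1 + (Δq + 1) / (δq - 1)) := by
    have : (0 : ℚ) ≤ (Δq + 1) / (δq - 1) := div_nonneg (by linarith) hδ1.le
    linarith
  have hC : 2 * (1 + (Δq + 1) / (δq - 1))
      * ((Fintype.card A : ℚ) * ((δq - 1) / (2 * (δq + Δq)))) = (Fintype.card A : ℚ) := by
    have h1 : δq - 1 ≠ 0 := ne_of_gt hδ1
    have h2 : δq + Δq ≠ 0 := by positivity
    field_simp
    ring
  have hfinal : (Fintype.card A : ℚ) ≤ 2 * (1 + (Δq + 1) / (δq - 1)) * W := by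
    calc (Fintype.card A : ℚ)
        = 2 * (1 + (Δq + 1) / (δq - 1))
          * ((Fintype.card A : ℚ) * ((δq - 1) / (2 * (δq + Δq)))) := hC.symm
      _ ≤ 2 * (1 + (Δq + 1) / (δq - 1)) * W :=
          mul_le_mul_of_nonneg_left part1 hCpos
  rw [hWeq]
  linarith
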